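/- Let κ > 0 and α_0 > 0. Let ψ̄, ᾱ, β̄, P̄ : [0, ∞) → ℝ decay to zero exponentially, let β : [0, ∞) → ℝ be bounded, and let ψ, P_REF : [0, ∞) → ℝ be bounded by polynomial functions. Let φ̄ : [0, ∞) → ℝ be differentiable and satisfy the error dynamics φ̄'(t) = -κ φ̄(t) + κ ψ̄(t) - α_0 ψ̄(t) - ᾱ(t) ψ(t) - β̄(t) P_REF(t) - β(t) P̄(t) for all t ≥ 0. Then φ̄(t) → 0 as t → ∞. -/

import Mathlib

open Real Filter MeasureTheory intervalIntegral

lemma aux_pow_le_exp (k : ℕ) (η x : ℝ) (hη : 0 < η) (hx : 0 ≤ x) :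
    x ^ k ≤ (k.factorial / η ^ k) * Real.exp (η * x) := by
  have h1 : (η * x) ^ k / k.factorial ≤ Real.exp (η * x) := by
    have := Real.sum_le_exp_of_nonneg (mul_nonneg hη.le hx) (k + 1)
    refine le_trans ?_ this
    exact Finset.single_le_sum (f := fun i => (η*x)^i / i.factorial)
      (fun i _ => by positivity) (Finset.self_mem_range_succ k)
  have hηk : (0:ℝ) < η ^ k := pow_pos hη k
  have := (div_le_iff₀ (by positivity : (0:ℝ) < (k.factorial : ℝ))).mp h1
  calc x ^ k = (η * x) ^ k / η ^ k := by rw [mul_pow]; field_simp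
    _ ≤ (k.factorial * Real.exp (η * x)) / η ^ k := by
        gcongr
        linarith [this]
    _ = (k.factorial / η ^ k) * Real.exp (η * x) := by ring

lemma aux_poly_decay (q : ℕ) (c : ℕ → ℝ) (ϱ δ : ℝ) (hδ : 0 < δ) (hϱ : δ < ϱ) :
    ∃ K : ℝ, 0 ≤ K ∧ ∀ x : ℝ, 0 ≤ x →
      (∑ k ∈ Finset.range (q + 1), c k * x ^ k) * Real.exp (-ϱ * x) ≤ K * Real.exp (-δ * x) := by
  set η := ϱ - δ with hη
  have hη0 : 0 < η := by simp [hη]; linarith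
  refine ⟨∑ k ∈ Finset.range (q + 1), |c k| * (k.factorial / η ^ k), ?_, ?_⟩
  · apply Finset.sum_nonneg; intro k _; positivity
  · intro x hx
    rw [Finset.sum_mul, Finset.sum_mul]
    apply Finset.sum_le_sum
    intro k _
    have h1 : c k * x ^ k ≤ |c k| * ((k.factorial / η ^ k) * Real.exp (η * x)) := by
      calc c k * x ^ k ≤ |c k| * x ^ k := by
            apply mul_le_mul_of_nonneg_right (le_abs_self _) (by positivity)
        _ ≤ |c k| * ((k.factorial / η ^ k) * Real.exp (η * x)) :=
            mul_le_mul_of_nonneg_left (aux_pow_le_exp k η x hη0 hx) (abs_nonneg _)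
    calc c k * x ^ k * Real.exp (-ϱ * x)
        ≤ |c k| * ((k.factorial / η ^ k) * Real.exp (η * x)) * Real.exp (-ϱ * x) :=
          mul_le_mul_of_nonneg_right h1 (Real.exp_pos _).le
      _ = |c k| * (k.factorial / η ^ k) * Real.exp (-δ * x) := by
          have : Real.exp (η * x) * Real.exp (-ϱ * x) = Real.exp (-δ * x) := by
            rw [← Real.exp_add]; congr 1; simp [hη]; ring
          rw [mul_assoc, mul_assoc, this]; ring

/-- **Final convergence step of the stability analysis.** The tracking error
`φ̄ = φᵢ − ψ₀` obeys `φ̄' = -κ φ̄ + κ ψ̄ - α₀ ψ̄ - ᾱ ψ - β̄ P_REF - β P̄` where the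
observer errors `ψ̄, ᾱ, β̄, P̄` decay exponentially, `β` is bounded and `ψ, P_REF`
are polynomially bounded; hence `φ̄(t) → 0` as `t → ∞`. -/
theorem tracking_error_converges_to_zero
    (κ α0 : ℝ) (hκ : 0 < κ) (hα0 : 0 < α0)
    (ψbar αbar βbar Pbar β ψ PREF φbar : ℝ → ℝ)
    (hψbar : ∃ ρ ϱ : ℝ, 0 < ρ ∧ 0 < ϱ ∧ ∀ t : ℝ, 0 ≤ t → |ψbar t| ≤ ρ * Real.exp (-ϱ * t))
    (hαbar : ∃ ρ ϱ : ℝ, 0 < ρ ∧ 0 < ϱ ∧ ∀ t : ℝ, 0 ≤ t → |αbar t| ≤ ρ * Real.exp (-ϱ * t))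
    (hβbar : ∃ ρ ϱ : ℝ, 0 < ρ ∧ 0 < ϱ ∧ ∀ t : ℝ, 0 ≤ t → |βbar t| ≤ ρ * Real.exp (-ϱ * t))
    (hPbar : ∃ ρ ϱ : ℝ, 0 < ρ ∧ 0 < ϱ ∧ ∀ t : ℝ, 0 ≤ t → |Pbar t| ≤ ρ * Real.exp (-ϱ * t))
    (hβbdd : ∃ M : ℝ, ∀ t : ℝ, 0 ≤ t → |β t| ≤ M)
    (hψpoly : ∃ (q : ℕ) (c : ℕ → ℝ),
      ∀ t : ℝ, 0 ≤ t → |ψ t| ≤ ∑ k ∈ Finset.range (q + 1), c k * t ^ k)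
    (hPpoly : ∃ (q : ℕ) (c : ℕ → ℝ),
      ∀ t : ℝ, 0 ≤ t → |PREF t| ≤ ∑ k ∈ Finset.range (q + 1), c k * t ^ k)
    (hφbar : ∀ t : ℝ, 0 ≤ t → HasDerivAt φbar
      (-κ * φbar t + κ * ψbar t - α0 * ψbar t - αbar t * ψ t
        - βbar t * PREF t - β t * Pbar t) t) :
    Filter.Tendsto φbar Filter.atTop (nhds 0) := by
  obtain ⟨ρ1, ϱ1, hρ1, hϱ1, h1⟩ := hψbar
  obtain ⟨ρ2, ϱ2, hρ2, hϱ2, h2⟩ := hαbar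
  obtain ⟨ρ3, ϱ3, hρ3, hϱ3, h3⟩ := hβbar
  obtain ⟨ρ4, ϱ4, hρ4, hϱ4, h4⟩ := hPbar
  obtain ⟨M, hM⟩ := hβbdd
  obtain ⟨q1, c1, hc1⟩ := hψpoly
  obtain ⟨q2, c2, hc2⟩ := hPpoly
  have hM0 : 0 ≤ M := le_trans (abs_nonneg _) (hM 0 le_rfl)
  set m := min κ (min ϱ1 (min ϱ2 (min ϱ3 ϱ4))) with hm
  have hm0 : 0 < m := by
    simp only [hm, lt_min_iff]
    exact ⟨hκ, hϱ1, hϱ2, hϱ3, hϱ4⟩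
  set δ := m / 2 with hδdef
  have hδ0 : 0 < δ := by positivity
  have hδm : δ < m := by simp [hδdef]; linarith
  have hδκ : δ < κ := lt_of_lt_of_le hδm (min_le_left _ _)
  have hδ1 : δ ≤ ϱ1 := le_trans hδm.le ((min_le_right _ _).trans (min_le_left _ _))
  have hδ2 : δ < ϱ2 := lt_of_lt_of_le hδm ((min_le_right _ _).trans
    ((min_le_right _ _).trans (min_le_left _ _)))
  have hδ3 : δ < ϱ3 := lt_of_lt_of_le hδm ((min_le_right _ _).trans
    ((min_le_right _ _).trans ((min_le_right _ _).trans (min_le_left _ _))))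
  have hδ4 : δ ≤ ϱ4 := le_trans hδm.le ((min_le_right _ _).trans
    ((min_le_right _ _).trans ((min_le_right _ _).trans (min_le_right _ _))))
  obtain ⟨K2, hK20, hK2⟩ := aux_poly_decay q1 c1 ϱ2 δ hδ0 hδ2
  obtain ⟨K3, hK30, hK3⟩ := aux_poly_decay q2 c2 ϱ3 δ hδ0 hδ3
  -- decay of exp with smaller rate
  have hexple : ∀ (ϱ : ℝ), δ ≤ ϱ → ∀ x : ℝ, 0 ≤ x →
      Real.exp (-ϱ * x) ≤ Real.exp (-δ * x) := by
    intro ϱ hϱ x hx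
    apply Real.exp_le_exp.mpr
    nlinarith
  -- the forcing term
  set u : ℝ → ℝ := fun t => κ * ψbar t - α0 * ψbar t - αbar t * ψ t
    - βbar t * PREF t - β t * Pbar t with hu_def
  set C : ℝ := (κ + α0) * ρ1 + ρ2 * K2 + ρ3 * K3 + M * ρ4 with hC_def
  have hC0 : 0 ≤ C := by positivity
  have hu : ∀ t : ℝ, 0 ≤ t → |u t| ≤ C * Real.exp (-δ * t) := by
    intro t ht
    have e1 : |κ * ψbar t - α0 * ψbar t| ≤ (κ + α0) * ρ1 * Real.exp (-δ * t) := by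
      have : |κ * ψbar t - α0 * ψbar t| = |κ - α0| * |ψbar t| := by
        rw [← abs_mul]; ring_nf
      rw [this]
      have hle : |κ - α0| ≤ κ + α0 := by
        rw [abs_le]; constructor <;> linarith
      calc |κ - α0| * |ψbar t| ≤ (κ + α0) * (ρ1 * Real.exp (-ϱ1 * t)) := by
            apply mul_le_mul hle (h1 t ht) (abs_nonneg _) (by linarith)
        _ ≤ (κ + α0) * ρ1 * Real.exp (-δ * t) := by
            rw [mul_assoc]
            apply mul_le_mul_of_nonneg_left _ (by linarith)
            exact mul_le_mul_of_nonneg_left (hexple ϱ1 hδ1 t ht) hρ1.le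
    have hpsinn : (0:ℝ) ≤ ∑ k ∈ Finset.range (q1 + 1), c1 k * t ^ k :=
      le_trans (abs_nonneg _) (hc1 t ht)
    have e2 : |αbar t * ψ t| ≤ ρ2 * K2 * Real.exp (-δ * t) := by
      rw [abs_mul]
      calc |αbar t| * |ψ t| ≤ (ρ2 * Real.exp (-ϱ2 * t)) *
            (∑ k ∈ Finset.range (q1 + 1), c1 k * t ^ k) := by
            apply mul_le_mul (h2 t ht) (hc1 t ht) (abs_nonneg _) (by positivity)
        _ = ρ2 * ((∑ k ∈ Finset.range (q1 + 1), c1 k * t ^ k) * Real.exp (-ϱ2 * t)) := by ring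
        _ ≤ ρ2 * (K2 * Real.exp (-δ * t)) :=
            mul_le_mul_of_nonneg_left (hK2 t ht) hρ2.le
        _ = ρ2 * K2 * Real.exp (-δ * t) := by ring
    have hPnn : (0:ℝ) ≤ ∑ k ∈ Finset.range (q2 + 1), c2 k * t ^ k :=
      le_trans (abs_nonneg _) (hc2 t ht)
    have e3 : |βbar t * PREF t| ≤ ρ3 * K3 * Real.exp (-δ * t) := by
      rw [abs_mul]
      calc |βbar t| * |PREF t| ≤ (ρ3 * Real.exp (-ϱ3 * t)) *
            (∑ k ∈ Finset.range (q2 + 1), c2 k * t ^ k) := by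
            apply mul_le_mul (h3 t ht) (hc2 t ht) (abs_nonneg _) (by positivity)
        _ = ρ3 * ((∑ k ∈ Finset.range (q2 + 1), c2 k * t ^ k) * Real.exp (-ϱ3 * t)) := by ring
        _ ≤ ρ3 * (K3 * Real.exp (-δ * t)) :=
            mul_le_mul_of_nonneg_left (hK3 t ht) hρ3.le
        _ = ρ3 * K3 * Real.exp (-δ * t) := by ring
    have e4 : |β t * Pbar t| ≤ M * ρ4 * Real.exp (-δ * t) := by
      rw [abs_mul]
      calc |β t| * |Pbar t| ≤ M * (ρ4 * Real.exp (-ϱ4 * t)) :=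
            mul_le_mul (hM t ht) (h4 t ht) (abs_nonneg _) hM0
        _ ≤ M * (ρ4 * Real.exp (-δ * t)) := by
            apply mul_le_mul_of_nonneg_left _ hM0
            exact mul_le_mul_of_nonneg_left (hexple ϱ4 hδ4 t ht) hρ4.le
        _ = M * ρ4 * Real.exp (-δ * t) := by ring
    have : |u t| ≤ |κ * ψbar t - α0 * ψbar t| + |αbar t * ψ t|
        + |βbar t * PREF t| + |β t * Pbar t| := by
      simp only [hu_def]
      calc |κ * ψbar t - α0 * ψbar t - αbar t * ψ t - βbar t * PREF t - β t * Pbar t|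
          ≤ |κ * ψbar t - α0 * ψbar t - αbar t * ψ t - βbar t * PREF t| + |β t * Pbar t| :=
            abs_sub _ _
        _ ≤ |κ * ψbar t - α0 * ψbar t - αbar t * ψ t| + |βbar t * PREF t| + |β t * Pbar t| :=
            add_le_add (abs_sub _ _) le_rfl
        _ ≤ |κ * ψbar t - α0 * ψbar t| + |αbar t * ψ t| + |βbar t * PREF t| + |β t * Pbar t| := by
            have := abs_sub (κ * ψbar t - α0 * ψbar t) (αbar t * ψ t)
            linarith
    calc |u t| ≤ _ := this
      _ ≤ C * Real.exp (-δ * t) := by rw [hC_def]; linarith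
  -- the auxiliary function g = exp(κ t) φbar t
  set g : ℝ → ℝ := fun t => Real.exp (κ * t) * φbar t with hg_def
  have hg : ∀ t : ℝ, 0 ≤ t → HasDerivAt g (Real.exp (κ * t) * u t) t := by
    intro t ht
    have he : HasDerivAt (fun s : ℝ => Real.exp (κ * s)) (κ * Real.exp (κ * t)) t := by
      have := (Real.hasDerivAt_exp (κ * t)).comp t ((hasDerivAt_id t).const_mul κ)
      exact this.congr_deriv (by ring)
    have := he.mul (hφbar t ht)
    refine this.congr_deriv ?_
    simp only [hu_def]
    ring
  -- key pointwise bound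
  have key : ∀ t : ℝ, 0 ≤ t →
      |φbar t| ≤ |g 0| * Real.exp (-κ * t) + (C / (κ - δ)) * Real.exp (-δ * t) := by
    intro t ht
    have hderiv : ∀ x ∈ Set.uIcc (0:ℝ) t, HasDerivAt g (deriv g x) x := by
      intro x hx
      rw [Set.uIcc_of_le ht] at hx
      exact (hg x hx.1).deriv ▸ hg x hx.1
    have hdeq : ∀ x : ℝ, 0 ≤ x → deriv g x = Real.exp (κ * x) * u x :=
      fun x hx => (hg x hx).deriv
    have hbound : ∀ x ∈ Set.Icc (0:ℝ) t, |deriv g x| ≤ C * Real.exp ((κ - δ) * x) := by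
      intro x hx
      rw [hdeq x hx.1, abs_mul, abs_of_pos (Real.exp_pos _)]
      calc Real.exp (κ * x) * |u x| ≤ Real.exp (κ * x) * (C * Real.exp (-δ * x)) :=
            mul_le_mul_of_nonneg_left (hu x hx.1) (Real.exp_pos _).le
        _ = C * Real.exp ((κ - δ) * x) := by
            rw [← mul_assoc, mul_comm (Real.exp (κ*x)) C, mul_assoc, ← Real.exp_add]
            ring_nf
    have hint : IntervalIntegrable (deriv g) volume 0 t := by
      rw [intervalIntegrable_iff_integrableOn_Ioc_of_le ht]
      refine Integrable.mono' (integrable_const (C * Real.exp ((κ - δ) * t)))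
        ((measurable_deriv g).aestronglyMeasurable.restrict) ?_
      filter_upwards [ae_restrict_mem measurableSet_Ioc] with x hx
      calc ‖deriv g x‖ = |deriv g x| := rfl
        _ ≤ C * Real.exp ((κ - δ) * x) := hbound x ⟨hx.1.le, hx.2⟩
        _ ≤ C * Real.exp ((κ - δ) * t) := by
            apply mul_le_mul_of_nonneg_left _ hC0
            apply Real.exp_le_exp.mpr
            apply mul_le_mul_of_nonneg_left hx.2 (by linarith)
    have hintC : IntervalIntegrable (fun x => C * Real.exp ((κ - δ) * x)) volume 0 t :=
      (continuous_const.mul (Real.continuous_exp.comp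
        (continuous_const.mul continuous_id))).intervalIntegrable 0 t
    have hftc : ∫ x in (0:ℝ)..t, deriv g x = g t - g 0 :=
      intervalIntegral.integral_eq_sub_of_hasDerivAt hderiv hint
    have hFexp : ∀ x : ℝ, HasDerivAt (fun s : ℝ => (C / (κ - δ)) * Real.exp ((κ - δ) * s))
        (C * Real.exp ((κ - δ) * x)) x := by
      intro x
      have hne : κ - δ ≠ 0 := ne_of_gt (by linarith)
      have he : HasDerivAt (fun s : ℝ => Real.exp ((κ - δ) * s))
          (Real.exp ((κ - δ) * x) * (κ - δ)) x := by
        simpa using ((hasDerivAt_id x).const_mul (κ - δ)).exp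
      have h2 := he.const_mul (C / (κ - δ))
      refine h2.congr_deriv ?_
      rw [mul_comm (Real.exp ((κ - δ) * x)) (κ - δ), ← mul_assoc,
        div_mul_cancel₀ _ hne]
    have hexpint : ∫ x in (0:ℝ)..t, C * Real.exp ((κ - δ) * x)
        = (C / (κ - δ)) * Real.exp ((κ - δ) * t) - (C / (κ - δ)) := by
      have := intervalIntegral.integral_eq_sub_of_hasDerivAt
        (fun x _ => hFexp x) hintC
      rw [this]
      simp
    have habs : |g t - g 0| ≤ (C / (κ - δ)) * Real.exp ((κ - δ) * t) := by
      rw [← hftc]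
      calc |∫ x in (0:ℝ)..t, deriv g x| ≤ ∫ x in (0:ℝ)..t, |deriv g x| :=
            intervalIntegral.abs_integral_le_integral_abs ht
        _ ≤ ∫ x in (0:ℝ)..t, C * Real.exp ((κ - δ) * x) := by
            apply intervalIntegral.integral_mono_on ht hint.abs hintC
            exact hbound
        _ = (C / (κ - δ)) * Real.exp ((κ - δ) * t) - (C / (κ - δ)) := hexpint
        _ ≤ (C / (κ - δ)) * Real.exp ((κ - δ) * t) := by
            have : 0 ≤ C / (κ - δ) := div_nonneg hC0 (by linarith)
            linarith
    have hgt : |g t| ≤ |g 0| + (C / (κ - δ)) * Real.exp ((κ - δ) * t) := by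
      have := abs_sub_abs_le_abs_sub (g t) (g 0)
      linarith [habs, this]
    have hφeq : φbar t = Real.exp (-κ * t) * g t := by
      simp only [hg_def]
      rw [← mul_assoc, ← Real.exp_add]
      simp
    rw [hφeq, abs_mul, abs_of_pos (Real.exp_pos _)]
    calc Real.exp (-κ * t) * |g t|
        ≤ Real.exp (-κ * t) * (|g 0| + (C / (κ - δ)) * Real.exp ((κ - δ) * t)) :=
          mul_le_mul_of_nonneg_left hgt (Real.exp_pos _).le
      _ = |g 0| * Real.exp (-κ * t) + (C / (κ - δ)) *
          (Real.exp (-κ * t) * Real.exp ((κ - δ) * t)) := by ring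
      _ = |g 0| * Real.exp (-κ * t) + (C / (κ - δ)) * Real.exp (-δ * t) := by
          rw [← Real.exp_add]; ring_nf
  -- squeeze
  have hgen : ∀ a : ℝ, 0 < a → Tendsto (fun t : ℝ => Real.exp (-a * t)) atTop (nhds 0) := by
    intro a ha
    have h := Real.tendsto_exp_neg_atTop_nhds_zero.comp
      (Filter.Tendsto.const_mul_atTop ha (Filter.tendsto_id (α := ℝ)))
    have heq : (fun t : ℝ => Real.exp (-a * t))
        = (fun x : ℝ => Real.exp (-x)) ∘ (fun t : ℝ => a * t) := by
      funext t; simp [Function.comp, neg_mul]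
    rw [heq]
    exact h
  have hek := hgen κ hκ
  have heδ := hgen δ hδ0
  have hbnd : Tendsto (fun t : ℝ => |g 0| * Real.exp (-κ * t)
      + (C / (κ - δ)) * Real.exp (-δ * t)) atTop (nhds 0) := by
    have := (hek.const_mul (|g 0|)).add (heδ.const_mul (C / (κ - δ)))
    simpa using this
  apply squeeze_zero_norm' _ hbnd
  filter_upwards [eventually_ge_atTop (0:ℝ)] with t ht
  simpa [Real.norm_eq_abs] using key t ht
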